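/- Let γ ≥ 0 and suppose S ≥ 0. Then Z ≤ γ if and only if (1 + γ²/n)·S² − γ²·Q ≤ 0. (Case 1 of the feasibility reformulation of the minimization Z-test.) -/

import Mathlib

theorem stmt_0 (n : ℕ) (hn : 1 ≤ n) (t : Fin n → ℝ)
    (S Q σ Z : ℝ)
    (hS : S = ∑ k, t k) (hQ : Q = ∑ k, (t k) ^ 2)
    (hσ : σ = Real.sqrt (Q / n - (S / n) ^ 2)) (hσpos : 0 < σ)
    (hZ : Z = S / (Real.sqrt n * σ))
    (γ : ℝ) (hγ : 0 ≤ γ) (hSpos : 0 ≤ S) :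
    Z ≤ γ ↔ (1 + γ ^ 2 / n) * S ^ 2 - γ ^ 2 * Q ≤ 0 := by
  have hn0 : (0:ℝ) < n := by positivity
  have harg : 0 < Q / n - (S / n) ^ 2 := by
    by_contra h
    push_neg at h
    rw [hσ, Real.sqrt_eq_zero_of_nonpos h] at hσpos
    exact lt_irrefl 0 hσpos
  have hσsq : σ ^ 2 = Q / n - (S / n) ^ 2 := by
    rw [hσ, Real.sq_sqrt harg.le]
  have hsn : 0 < Real.sqrt n := Real.sqrt_pos.mpr hn0
  have hden : 0 < Real.sqrt n * σ := mul_pos hsn hσpos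
  have hnsq : Real.sqrt n ^ 2 = n := Real.sq_sqrt hn0.le
  have hRHS : 0 ≤ γ * (Real.sqrt n * σ) := by positivity
  have hne : (n:ℝ) ≠ 0 := hn0.ne'
  have esq : (γ * (Real.sqrt n * σ)) ^ 2 * n = γ ^ 2 * ((n:ℝ) * Q - S ^ 2) := by
    rw [mul_pow, mul_pow, hnsq, hσsq]
    field_simp
  have egoal : ((1 + γ ^ 2 / n) * S ^ 2 - γ ^ 2 * Q) * n
      = S ^ 2 * n - γ ^ 2 * ((n:ℝ) * Q - S ^ 2) := by
    field_simp
    ring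
  rw [hZ, div_le_iff₀ hden]
  constructor
  · intro h
    have h2 : S ^ 2 ≤ (γ * (Real.sqrt n * σ)) ^ 2 := by
      exact pow_le_pow_left₀ hSpos h 2
    have h3 : S ^ 2 * n ≤ (γ * (Real.sqrt n * σ)) ^ 2 * n :=
      mul_le_mul_of_nonneg_right h2 hn0.le
    rw [esq] at h3
    have : ((1 + γ ^ 2 / n) * S ^ 2 - γ ^ 2 * Q) * n ≤ 0 := by
      rw [egoal]; linarith
    nlinarith
  · intro h
    have h3 : S ^ 2 * n ≤ (γ * (Real.sqrt n * σ)) ^ 2 * n := by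
      rw [esq]
      have := mul_le_mul_of_nonneg_right h hn0.le
      rw [egoal] at this
      linarith
    have h2 : S ^ 2 ≤ (γ * (Real.sqrt n * σ)) ^ 2 :=
      le_of_mul_le_mul_right h3 hn0
    exact (pow_le_pow_iff_left₀ hSpos hRHS (by norm_num)).mp h2
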